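/- With m(t) = ∫₀^∞ φ_{1/n+σ²/u}(t) k_λ(u) du (a scale mixture of centered normals), the function s ↦ log m(√s) is convex on (0,∞); equivalently, m(t) is log-convex as a function of t². -/

import Mathlib

open MeasureTheory Real Set

/-- Normal density with mean 0 and variance `v`. -/
noncomputable def normalPdf (v t : ℝ) : ℝ :=
  (Real.sqrt (2 * Real.pi * v))⁻¹ * Real.exp (-t ^ 2 / (2 * v))

/-- Gamma(shape l/2, rate l/2) density (on `(0,∞)`). -/
noncomputable def gammaPdf (l u : ℝ) : ℝ :=
  ((l / 2) ^ (l / 2) / Real.Gamma (l / 2)) * u ^ (l / 2 - 1) * Real.exp (-(l * u / 2))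

section aux

variable {n : ℕ} {σ2 l : ℝ}

lemma V_pos (hn : 0 < n) (hσ : 0 < σ2) {u : ℝ} (hu : 0 < u) :
    0 < 1 / (n : ℝ) + σ2 / u := by
  have h1 : (0:ℝ) < n := by exact_mod_cast hn
  positivity

lemma gammaPdf_pos (hl : 0 < l) {u : ℝ} (hu : 0 < u) : 0 < gammaPdf l u := by
  unfold gammaPdf
  have h1 : 0 < (l / 2) ^ (l / 2) := Real.rpow_pos_of_pos (by linarith) _
  have h2 : 0 < Real.Gamma (l / 2) := Real.Gamma_pos_of_pos (by linarith)
  have h3 : 0 < u ^ (l / 2 - 1) := Real.rpow_pos_of_pos hu _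
  positivity

lemma normalPdf_pos {v : ℝ} (hv : 0 < v) (t : ℝ) : 0 < normalPdf v t := by
  unfold normalPdf
  have h1 : 0 < Real.sqrt (2 * Real.pi * v) :=
    Real.sqrt_pos.mpr (by positivity)
  positivity

lemma normalPdf_sqrt {v : ℝ} {s : ℝ} (hs : 0 ≤ s) :
    normalPdf v (Real.sqrt s) =
      (Real.sqrt (2 * Real.pi * v))⁻¹ * Real.exp (-(s * (2 * v)⁻¹)) := by
  unfold normalPdf
  rw [Real.sq_sqrt hs, div_eq_mul_inv, neg_mul]

lemma measF (t : ℝ) :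
    Measurable (fun u : ℝ => normalPdf (1 / (n:ℝ) + σ2 / u) t * gammaPdf l u) := by
  unfold normalPdf gammaPdf
  have hV : Measurable (fun u : ℝ => 1 / (n:ℝ) + σ2 / u) :=
    measurable_const.add (measurable_const.div measurable_id)
  have h1 : Measurable (fun u : ℝ => (Real.sqrt (2 * Real.pi * (1 / (n:ℝ) + σ2 / u)))⁻¹) :=
    (Real.continuous_sqrt.measurable.comp ((measurable_const.mul hV))).inv
  have h2 : Measurable (fun u : ℝ => Real.exp (-t ^ 2 / (2 * (1 / (n:ℝ) + σ2 / u)))) :=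
    (Real.continuous_exp.measurable.comp
      (measurable_const.div (measurable_const.mul hV)))
  have h3 : Measurable (fun u : ℝ => u ^ (l / 2 - 1)) := by fun_prop
  have h4 : Measurable (fun u : ℝ => Real.exp (-(l * u / 2))) :=
    (Real.continuous_exp.measurable.comp
      (((measurable_const.mul measurable_id).div_const 2).neg))
  exact (h1.mul h2).mul ((measurable_const.mul h3).mul h4)

lemma integrableF (hn : 0 < n) (hσ : 0 < σ2) (hl : 0 < l) {s : ℝ} (hs : 0 ≤ s) :
    IntegrableOn (fun u : ℝ =>
      normalPdf (1 / (n:ℝ) + σ2 / u) (Real.sqrt s) * gammaPdf l u) (Set.Ioi 0) := by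
  have hn' : (0:ℝ) < n := by exact_mod_cast hn
  set c : ℝ := (Real.sqrt (2 * Real.pi * (1 / (n:ℝ))))⁻¹ *
    ((l / 2) ^ (l / 2) / Real.Gamma (l / 2)) with hc
  have hcnn : 0 ≤ c := by
    have h2 : 0 < Real.Gamma (l / 2) := Real.Gamma_pos_of_pos (by linarith)
    have h1 : 0 ≤ (l / 2) ^ (l / 2) := (Real.rpow_pos_of_pos (by linarith) _).le
    positivity
  have hg : IntegrableOn (fun u : ℝ =>
      c * (u ^ (l / 2 - 1) * Real.exp (-(l / 2) * u ^ (1:ℝ)))) (Set.Ioi 0) := by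
    exact (integrableOn_rpow_mul_exp_neg_mul_rpow (by linarith) one_pos (by linarith)).const_mul c
  refine Integrable.mono' hg ((measF _).aestronglyMeasurable) ?_
  filter_upwards [ae_restrict_mem measurableSet_Ioi] with u hu
  have hu' : (0:ℝ) < u := hu
  have hV : 0 < 1 / (n : ℝ) + σ2 / u := V_pos hn hσ hu'
  have hVn : 1 / (n : ℝ) ≤ 1 / (n : ℝ) + σ2 / u := by
    have : 0 < σ2 / u := by positivity
    linarith
  have hFnn : 0 ≤ normalPdf (1 / (n:ℝ) + σ2 / u) (Real.sqrt s) * gammaPdf l u :=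
    mul_nonneg (normalPdf_pos hV _).le (gammaPdf_pos hl hu').le
  rw [Real.norm_of_nonneg hFnn]
  have hs1 : 0 < Real.sqrt (2 * Real.pi * (1 / (n:ℝ))) :=
    Real.sqrt_pos.mpr (by positivity)
  have hA : (Real.sqrt (2 * Real.pi * (1 / (n:ℝ) + σ2 / u)))⁻¹ ≤
      (Real.sqrt (2 * Real.pi * (1 / (n:ℝ))))⁻¹ := by
    apply inv_anti₀ hs1
    exact Real.sqrt_le_sqrt (by nlinarith [Real.pi_pos])
  have hE : Real.exp (-(Real.sqrt s) ^ 2 / (2 * (1 / (n:ℝ) + σ2 / u))) ≤ 1 := by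
    rw [Real.exp_le_one_iff]
    apply div_nonpos_of_nonpos_of_nonneg
    · simp [sq_nonneg]
    · linarith
  have hgp : gammaPdf l u = ((l / 2) ^ (l / 2) / Real.Gamma (l / 2)) *
      (u ^ (l / 2 - 1) * Real.exp (-(l / 2) * u ^ (1:ℝ))) := by
    unfold gammaPdf
    rw [Real.rpow_one]
    ring_nf
  have hgnn : 0 ≤ gammaPdf l u := (gammaPdf_pos hl hu').le
  calc normalPdf (1 / (n:ℝ) + σ2 / u) (Real.sqrt s) * gammaPdf l u
      ≤ (Real.sqrt (2 * Real.pi * (1 / (n:ℝ))))⁻¹ * gammaPdf l u := by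
        unfold normalPdf
        have hAE : (Real.sqrt (2 * Real.pi * (1 / (n:ℝ) + σ2 / u)))⁻¹ *
            Real.exp (-(Real.sqrt s) ^ 2 / (2 * (1 / (n:ℝ) + σ2 / u))) ≤
            (Real.sqrt (2 * Real.pi * (1 / (n:ℝ))))⁻¹ := by
          have := mul_le_mul hA hE (Real.exp_pos _).le (by positivity)
          simpa using this
        exact mul_le_mul_of_nonneg_right hAE hgnn
    _ = c * (u ^ (l / 2 - 1) * Real.exp (-(l / 2) * u ^ (1:ℝ))) := by
        rw [hgp, hc]; ring

lemma comb {C θ x y a b : ℝ} (hC : 0 < C) (hab : a + b = 1) :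
    C * Real.exp (-((a * x + b * y) * θ)) =
      (C * Real.exp (-(x * θ))) ^ a * (C * Real.exp (-(y * θ))) ^ b := by
  rw [Real.mul_rpow hC.le (Real.exp_pos _).le, Real.mul_rpow hC.le (Real.exp_pos _).le,
    ← Real.exp_mul, ← Real.exp_mul]
  have h1 : C ^ a * Real.exp (-(x * θ) * a) * (C ^ b * Real.exp (-(y * θ) * b)) =
      (C ^ a * C ^ b) * Real.exp (-(x * θ) * a + -(y * θ) * b) := by
    rw [Real.exp_add]; ring
  rw [h1, ← Real.rpow_add hC, hab, Real.rpow_one]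
  congr 1; ring

end aux

/-- With `m(t) = ∫₀^∞ φ_{1/n+σ²/u}(t) k_λ(u) du`, the function
`s ↦ log m(√s)` is convex on `(0,∞)`; i.e. `m(t)` is log-convex as a function of `t²`. -/
theorem stmt7 (n : ℕ) (hn : 0 < n) (σ2 l : ℝ) (hσ : 0 < σ2) (hl : 0 < l) :
    ConvexOn ℝ (Set.Ioi (0 : ℝ)) (fun s : ℝ =>
      Real.log (∫ u in Set.Ioi (0 : ℝ),
        normalPdf (1 / n + σ2 / u) (Real.sqrt s) * gammaPdf l u)) := by
  have hn' : (0:ℝ) < n := by exact_mod_cast hn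
  -- positivity of the mixture integral
  have hmpos : ∀ s : ℝ, 0 ≤ s →
      0 < ∫ u in Set.Ioi (0:ℝ), normalPdf (1 / n + σ2 / u) (Real.sqrt s) * gammaPdf l u := by
    intro s hs
    rw [setIntegral_pos_iff_support_of_nonneg_ae ?hnn (integrableF hn hσ hl hs)]
    case hnn =>
      filter_upwards [ae_restrict_mem measurableSet_Ioi] with u hu
      exact (mul_pos (normalPdf_pos (V_pos hn hσ hu) _) (gammaPdf_pos hl hu)).le
    have hsub : Set.Ioi (0:ℝ) ⊆
        Function.support (fun u => normalPdf (1 / n + σ2 / u) (Real.sqrt s) * gammaPdf l u) ∩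
          Set.Ioi 0 := fun u hu =>
      ⟨(mul_pos (normalPdf_pos (V_pos hn hσ hu) _) (gammaPdf_pos hl hu)).ne', hu⟩
    calc (0:ENNReal) < volume (Set.Ioi (0:ℝ)) := by simp [Real.volume_Ioi]
      _ ≤ _ := measure_mono hsub
  -- integral as lintegral
  have hInt : ∀ {s : ℝ}, 0 ≤ s →
      (∫ u in Set.Ioi (0:ℝ), normalPdf (1 / n + σ2 / u) (Real.sqrt s) * gammaPdf l u) =
        (∫⁻ u in Set.Ioi (0:ℝ),
          ENNReal.ofReal (normalPdf (1 / n + σ2 / u) (Real.sqrt s) * gammaPdf l u)).toReal := by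
    intro s hs
    refine integral_eq_lintegral_of_nonneg_ae ?_ ((measF _).aestronglyMeasurable)
    filter_upwards [ae_restrict_mem measurableSet_Ioi] with u hu
    exact (mul_pos (normalPdf_pos (V_pos hn hσ hu) _) (gammaPdf_pos hl hu)).le
  have hfin : ∀ {s : ℝ}, 0 ≤ s →
      (∫⁻ u in Set.Ioi (0:ℝ),
        ENNReal.ofReal (normalPdf (1 / n + σ2 / u) (Real.sqrt s) * gammaPdf l u)) ≠ ⊤ := by
    intro s hs
    have h := (integrableF hn hσ hl hs (σ2 := σ2) (l := l)).2
    rw [hasFiniteIntegral_iff_ofReal ?_] at h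
    · exact h.ne
    · filter_upwards [ae_restrict_mem measurableSet_Ioi] with u hu
      exact (mul_pos (normalPdf_pos (V_pos hn hσ hu) _) (gammaPdf_pos hl hu)).le
  -- Hölder key inequality
  have key : ∀ x y a b : ℝ, 0 < x → 0 < y → 0 ≤ a → 0 ≤ b → a + b = 1 →
      (∫ u in Set.Ioi (0:ℝ),
        normalPdf (1 / n + σ2 / u) (Real.sqrt (a * x + b * y)) * gammaPdf l u) ≤
      (∫ u in Set.Ioi (0:ℝ), normalPdf (1 / n + σ2 / u) (Real.sqrt x) * gammaPdf l u) ^ a *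
      (∫ u in Set.Ioi (0:ℝ), normalPdf (1 / n + σ2 / u) (Real.sqrt y) * gammaPdf l u) ^ b := by
    intro x y a b hx hy ha hb hab
    have hxy : 0 ≤ a * x + b * y := add_nonneg (mul_nonneg ha hx.le) (mul_nonneg hb hy.le)
    have hpt : ∀ᵐ u ∂(volume.restrict (Set.Ioi (0:ℝ))),
        ENNReal.ofReal (normalPdf (1 / n + σ2 / u) (Real.sqrt (a * x + b * y)) * gammaPdf l u) =
        ENNReal.ofReal (normalPdf (1 / n + σ2 / u) (Real.sqrt x) * gammaPdf l u) ^ a *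
        ENNReal.ofReal (normalPdf (1 / n + σ2 / u) (Real.sqrt y) * gammaPdf l u) ^ b := by
      filter_upwards [ae_restrict_mem measurableSet_Ioi] with u hu
      have hV := V_pos hn hσ hu
      have hA : 0 < (Real.sqrt (2 * Real.pi * (1 / n + σ2 / u)))⁻¹ := by
        have := Real.sqrt_pos.mpr (show 0 < 2 * Real.pi * (1 / (n:ℝ) + σ2 / u) by positivity)
        positivity
      have hG := gammaPdf_pos hl hu
      have hC : 0 < (Real.sqrt (2 * Real.pi * (1 / (n:ℝ) + σ2 / u)))⁻¹ * gammaPdf l u :=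
        mul_pos hA hG
      have e1 : normalPdf (1 / n + σ2 / u) (Real.sqrt (a * x + b * y)) * gammaPdf l u =
          (normalPdf (1 / n + σ2 / u) (Real.sqrt x) * gammaPdf l u) ^ a *
          (normalPdf (1 / n + σ2 / u) (Real.sqrt y) * gammaPdf l u) ^ b := by
        rw [normalPdf_sqrt hxy, normalPdf_sqrt hx.le, normalPdf_sqrt hy.le]
        have hrw : ∀ E : ℝ,
            (Real.sqrt (2 * Real.pi * (1 / (n:ℝ) + σ2 / u)))⁻¹ * E * gammaPdf l u =
            ((Real.sqrt (2 * Real.pi * (1 / (n:ℝ) + σ2 / u)))⁻¹ * gammaPdf l u) * E :=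
          fun E => by ring
        rw [hrw, hrw, hrw, comb hC hab]
      have hnn1 : 0 ≤ normalPdf (1 / n + σ2 / u) (Real.sqrt x) * gammaPdf l u :=
        (mul_pos (normalPdf_pos hV _) hG).le
      have hnn2 : 0 ≤ normalPdf (1 / n + σ2 / u) (Real.sqrt y) * gammaPdf l u :=
        (mul_pos (normalPdf_pos hV _) hG).le
      rw [e1, ENNReal.ofReal_mul (Real.rpow_nonneg hnn1 a),
        ENNReal.ofReal_rpow_of_nonneg hnn1 ha, ENNReal.ofReal_rpow_of_nonneg hnn2 hb]
    calc (∫ u in Set.Ioi (0:ℝ),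
            normalPdf (1 / n + σ2 / u) (Real.sqrt (a * x + b * y)) * gammaPdf l u)
        = (∫⁻ u in Set.Ioi (0:ℝ),
            ENNReal.ofReal (normalPdf (1 / n + σ2 / u) (Real.sqrt x) * gammaPdf l u) ^ a *
            ENNReal.ofReal (normalPdf (1 / n + σ2 / u) (Real.sqrt y) * gammaPdf l u) ^ b).toReal := by
          rw [hInt hxy, lintegral_congr_ae hpt]
      _ ≤ ((∫⁻ u in Set.Ioi (0:ℝ),
              ENNReal.ofReal (normalPdf (1 / n + σ2 / u) (Real.sqrt x) * gammaPdf l u)) ^ a *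
            (∫⁻ u in Set.Ioi (0:ℝ),
              ENNReal.ofReal (normalPdf (1 / n + σ2 / u) (Real.sqrt y) * gammaPdf l u)) ^ b).toReal := by
          apply ENNReal.toReal_mono
          · exact ENNReal.mul_ne_top (ENNReal.rpow_ne_top_of_nonneg ha (hfin hx.le))
              (ENNReal.rpow_ne_top_of_nonneg hb (hfin hy.le))
          · exact ENNReal.lintegral_mul_norm_pow_le ((measF _).ennreal_ofReal.aemeasurable)
              ((measF _).ennreal_ofReal.aemeasurable) ha hb hab
      _ = (∫ u in Set.Ioi (0:ℝ), normalPdf (1 / n + σ2 / u) (Real.sqrt x) * gammaPdf l u) ^ a *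
          (∫ u in Set.Ioi (0:ℝ), normalPdf (1 / n + σ2 / u) (Real.sqrt y) * gammaPdf l u) ^ b := by
          rw [hInt hx.le, hInt hy.le, ENNReal.toReal_rpow, ENNReal.toReal_rpow,
            ← ENNReal.toReal_mul]
  refine ⟨convex_Ioi 0, ?_⟩
  intro x hx y hy a b ha hb hab
  have hx' : (0:ℝ) < x := hx
  have hy' : (0:ℝ) < y := hy
  simp only [smul_eq_mul]
  have hmx := hmpos x hx'.le
  have hmy := hmpos y hy'.le
  have hmab := hmpos (a * x + b * y)
    (add_nonneg (mul_nonneg ha hx'.le) (mul_nonneg hb hy'.le))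
  calc Real.log (∫ u in Set.Ioi (0:ℝ),
          normalPdf (1 / n + σ2 / u) (Real.sqrt (a * x + b * y)) * gammaPdf l u)
      ≤ Real.log
          ((∫ u in Set.Ioi (0:ℝ), normalPdf (1 / n + σ2 / u) (Real.sqrt x) * gammaPdf l u) ^ a *
           (∫ u in Set.Ioi (0:ℝ), normalPdf (1 / n + σ2 / u) (Real.sqrt y) * gammaPdf l u) ^ b) :=
        Real.log_le_log hmab (key x y a b hx' hy' ha hb hab)
    _ = a * Real.log (∫ u in Set.Ioi (0:ℝ),
            normalPdf (1 / n + σ2 / u) (Real.sqrt x) * gammaPdf l u) +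
        b * Real.log (∫ u in Set.Ioi (0:ℝ),
            normalPdf (1 / n + σ2 / u) (Real.sqrt y) * gammaPdf l u) := by
        rw [Real.log_mul (Real.rpow_pos_of_pos hmx a).ne' (Real.rpow_pos_of_pos hmy b).ne',
          Real.log_rpow hmx, Real.log_rpow hmy]
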